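/- arXiv:math/9908015 — 2 statements merged into one kernel-verified Lean document; each statement's English description precedes it below -/
import Mathlib

section
/- Let V be a real vector space with a hypercomplex structure (I_1, I_2, I_3), let F_2, F_3 be alternating bilinear forms on V such that F_2(I_1 X, Y) = -F_3(X, Y) for all X, Y, and suppose g(X,Y) := -F_2(I_2 X, Y) is symmetric and Hermitian with respect to I_2. Then g is Hermitian with respect to I_3, i.e., g(I_3 X, I_3 Y) = g(X, Y). -/
/-- If `F₂, F₃` are alternating bilinear forms with `F₂(I₁X, Y) = -F₃(X,Y)` and
`g(X,Y) := -F₂(I₂X, Y)` is symmetric and `I₂`-Hermitian, then `g` is `I₃`-Hermitian. -/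
theorem stmt3 (V : Type*) [AddCommGroup V] [Module ℝ V]
    (I1 I2 I3 : V →ₗ[ℝ] V)
    (h11 : ∀ x, I1 (I1 x) = -x) (h22 : ∀ x, I2 (I2 x) = -x) (h33 : ∀ x, I3 (I3 x) = -x)
    (h12 : ∀ x, I1 (I2 x) = I3 x) (h21 : ∀ x, I2 (I1 x) = -I3 x)
    (F2 F3 : V →ₗ[ℝ] V →ₗ[ℝ] ℝ)
    (hA2 : ∀ X, F2 X X = 0) (hA3 : ∀ X, F3 X X = 0)
    (hrel : ∀ X Y, F2 (I1 X) Y = -(F3 X Y))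
    (hsym : ∀ X Y, -(F2 (I2 X) Y) = -(F2 (I2 Y) X))
    (hherm2 : ∀ X Y, -(F2 (I2 (I2 X)) (I2 Y)) = -(F2 (I2 X) Y)) :
    ∀ X Y, -(F2 (I2 (I3 X)) (I3 Y)) = -(F2 (I2 X) Y) := by
  -- F₃ is antisymmetric
  have hanti3 : ∀ X Y, F3 X Y = -(F3 Y X) := by
    intro X Y
    have h := hA3 (X + Y)
    simp only [map_add, LinearMap.add_apply, hA3] at h
    linarith
  -- I₂ I₃ = I₁
  have e1 : ∀ x, I2 (I3 x) = I1 x := by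
    intro x
    rw [← h12, h21, ← h12, h22, map_neg, neg_neg]
  -- I₁ I₃ = -I₂
  have e2 : ∀ x, I1 (I3 x) = -(I2 x) := by
    intro x
    rw [← h12, h11]
  intro X Y
  rw [e1, hrel, hanti3 X (I3 Y), ← hrel, e2]
  simp only [map_neg, LinearMap.neg_apply, neg_neg]
  exact (hsym Y X).symm ▸ (by have := hsym X Y; linarith)
end

section
/- With notation as in the perturbed-metric construction: let g be a hyper-Hermitian inner product on V, v ∈ V nonzero, α(X) := g(v, X), α_a(X) := -g(v, I_a X), and for real constants p, q define ĥ(X,Y) = p·g(X,Y) + (q/4)(α(X)α(Y) + Σ_a α_a(X)α_a(Y)). If p + (q/4)g(v,v) > 0 and p > 0, then ĥ is positive definite. -/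
/-- Perturbed metric positivity: with `α(X) = g(v,X)`, `α_a(X) = -g(v, I_a X)` and
`ĥ(X,Y) = p g(X,Y) + (q/4)(α(X)α(Y) + Σ_a α_a(X)α_a(Y))`, if `p + (q/4) g(v,v) > 0`
and `p > 0`, then `ĥ` is positive definite. -/
theorem stmt15 (V : Type*) [NormedAddCommGroup V] [InnerProductSpace ℝ V]
    [FiniteDimensional ℝ V]
    (I1 I2 I3 : V →ₗ[ℝ] V)
    (h11 : ∀ x, I1 (I1 x) = -x) (h22 : ∀ x, I2 (I2 x) = -x) (h33 : ∀ x, I3 (I3 x) = -x)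
    (h12 : ∀ x, I1 (I2 x) = I3 x) (h21 : ∀ x, I2 (I1 x) = -I3 x)
    (hg1 : ∀ x y : V, (inner ℝ (I1 x) (I1 y) : ℝ) = inner ℝ x y)
    (hg2 : ∀ x y : V, (inner ℝ (I2 x) (I2 y) : ℝ) = inner ℝ x y)
    (hg3 : ∀ x y : V, (inner ℝ (I3 x) (I3 y) : ℝ) = inner ℝ x y)
    (v : V) (hv : v ≠ 0) (p q : ℝ)
    (hpq : p + q / 4 * (inner ℝ v v : ℝ) > 0) (hp : p > 0) :
    let α : V → ℝ := fun X => inner ℝ v X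
    let α1 : V → ℝ := fun X => -(inner ℝ v (I1 X) : ℝ)
    let α2 : V → ℝ := fun X => -(inner ℝ v (I2 X) : ℝ)
    let α3 : V → ℝ := fun X => -(inner ℝ v (I3 X) : ℝ)
    let hhat : V → V → ℝ := fun X Y =>
      p * (inner ℝ X Y : ℝ) +
        q / 4 * (α X * α Y + (α1 X * α1 Y + α2 X * α2 Y + α3 X * α3 Y))
    ∀ X : V, X ≠ 0 → 0 < hhat X X := by
  -- skewness of each Ia
  have sk1 : ∀ x y : V, (inner ℝ x (I1 y) : ℝ) = -(inner ℝ (I1 x) y : ℝ) := by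
    intro x y
    have := hg1 x (I1 y)
    rw [h11 y, inner_neg_right] at this
    linarith
  have sk2 : ∀ x y : V, (inner ℝ x (I2 y) : ℝ) = -(inner ℝ (I2 x) y : ℝ) := by
    intro x y
    have := hg2 x (I2 y)
    rw [h22 y, inner_neg_right] at this
    linarith
  have sk3 : ∀ x y : V, (inner ℝ x (I3 y) : ℝ) = -(inner ℝ (I3 x) y : ℝ) := by
    intro x y
    have := hg3 x (I3 y)
    rw [h33 y, inner_neg_right] at this
    linarith
  -- orthogonality facts
  have o1 : (inner ℝ v (I1 v) : ℝ) = 0 := by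
    have h := sk1 v v
    have h' := real_inner_comm v (I1 v)
    linarith
  have o2 : (inner ℝ v (I2 v) : ℝ) = 0 := by
    have h := sk2 v v
    have h' := real_inner_comm v (I2 v)
    linarith
  have o3 : (inner ℝ v (I3 v) : ℝ) = 0 := by
    have h := sk3 v v
    have h' := real_inner_comm v (I3 v)
    linarith
  have o12 : (inner ℝ (I1 v) (I2 v) : ℝ) = 0 := by
    have h := sk2 (I1 v) v
    rw [h21 v, inner_neg_left] at h
    have h' := real_inner_comm v (I3 v)
    linarith [o3]
  have o13 : (inner ℝ (I1 v) (I3 v) : ℝ) = 0 := by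
    have h := hg1 v (I2 v)
    rw [h12 v] at h
    rw [h, o2]
  have o23 : (inner ℝ (I2 v) (I3 v) : ℝ) = 0 := by
    have h := sk1 (I2 v) (I2 v)
    rw [h12 v] at h
    have h' := real_inner_comm (I2 v) (I3 v)
    linarith
  have n1 : (inner ℝ (I1 v) (I1 v) : ℝ) = inner ℝ v v := hg1 v v
  have n2 : (inner ℝ (I2 v) (I2 v) : ℝ) = inner ℝ v v := hg2 v v
  have n3 : (inner ℝ (I3 v) (I3 v) : ℝ) = inner ℝ v v := hg3 v v
  intro α α1 α2 α3 hhat X hX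
  set c : ℝ := inner ℝ v v with hc
  have hcpos : 0 < c := lt_of_le_of_ne real_inner_self_nonneg (Ne.symm (inner_self_ne_zero.mpr hv))
  set a : ℝ := inner ℝ v X with ha
  set b1 : ℝ := inner ℝ (I1 v) X with hb1
  set b2 : ℝ := inner ℝ (I2 v) X with hb2
  set b3 : ℝ := inner ℝ (I3 v) X with hb3
  -- α_a X = b_a
  have e1 : α1 X = b1 := by simp only [α1, sk1 v X, hb1, neg_neg]
  have e2 : α2 X = b2 := by simp only [α2, sk2 v X, hb2, neg_neg]
  have e3 : α3 X = b3 := by simp only [α3, sk3 v X, hb3, neg_neg]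
  set t : ℝ := inner ℝ X X with ht
  have htpos : 0 < t := lt_of_le_of_ne real_inner_self_nonneg (Ne.symm (inner_self_ne_zero.mpr hX))
  -- key: Bessel inequality
  have key : a ^ 2 + b1 ^ 2 + b2 ^ 2 + b3 ^ 2 ≤ c * t := by
    set w : V := c • X - (a • v + b1 • I1 v + b2 • I2 v + b3 • I3 v) with hw
    have hnn : (0 : ℝ) ≤ inner ℝ w w := real_inner_self_nonneg
    have hexp : (inner ℝ w w : ℝ) =
        c * c * t - c * (a ^ 2 + b1 ^ 2 + b2 ^ 2 + b3 ^ 2) := by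
      simp only [hw, inner_sub_left, inner_sub_right, inner_add_left, inner_add_right,
        real_inner_smul_left, real_inner_smul_right]
      rw [real_inner_comm v X, real_inner_comm (I1 v) X, real_inner_comm (I2 v) X,
        real_inner_comm (I3 v) X, real_inner_comm (I1 v) (I2 v),
        real_inner_comm (I1 v) (I3 v), real_inner_comm (I2 v) (I3 v),
        real_inner_comm v (I1 v), real_inner_comm v (I2 v), real_inner_comm v (I3 v),
        ← ha, ← hb1, ← hb2, ← hb3, ← ht, ← hc, o1, o2, o3, o12, o13, o23, n1, n2, n3]
      ring
    rw [hexp] at hnn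
    nlinarith [hcpos]
  have hval : hhat X X = p * t + q / 4 * (a ^ 2 + (b1 ^ 2 + b2 ^ 2 + b3 ^ 2)) := by
    simp only [hhat, e1, e2, e3, α, ← ha, ← ht]
    ring
  rw [hval]
  set s : ℝ := a ^ 2 + (b1 ^ 2 + b2 ^ 2 + b3 ^ 2) with hs
  have hsnn : 0 ≤ s := by positivity
  have key' : s ≤ c * t := by rw [hs]; linarith [key]
  rcases le_or_gt 0 q with hq | hq
  · have h1 : 0 ≤ q / 4 * s := by positivity
    have h2 : 0 < p * t := mul_pos hp htpos
    linarith
  · have hq4 : q / 4 ≤ 0 := by linarith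
    have h2 : q / 4 * (c * t) ≤ q / 4 * s := mul_le_mul_of_nonpos_left key' hq4
    have h3 : 0 < (p + q / 4 * c) * t := mul_pos hpq htpos
    have h4 : (p + q / 4 * c) * t = p * t + q / 4 * (c * t) := by ring
    linarith
end
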